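/- Suppose rational numbers u₁,u₂,v₁,v₂,m satisfy the linear system u₁v₁ + u₂v₂ + 2 = −m(u₁+u₂−v₁−v₂) and m(u₁v₁−u₂v₂) = u₁−u₂−v₁+v₂. Then (u₁v₁+1)² − (u₂v₂+1)² = (u₂−v₂)² − (u₁−v₁)², and consequently (u₁²+1)(v₁²+1) = (u₂²+1)(v₂²+1). -/
import Mathlib

theorem hexagon_linear_system (u1 u2 v1 v2 m : ℚ)
    (h1 : u1 * v1 + u2 * v2 + 2 = -(m * (u1 + u2 - v1 - v2)))
    (h2 : m * (u1 * v1 - u2 * v2) = u1 - u2 - v1 + v2) :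
    (u1 * v1 + 1)^2 - (u2 * v2 + 1)^2 = (u2 - v2)^2 - (u1 - v1)^2 ∧
    (u1^2 + 1) * (v1^2 + 1) = (u2^2 + 1) * (v2^2 + 1) := by
  have key : (u1 * v1 + 1)^2 - (u2 * v2 + 1)^2 = (u2 - v2)^2 - (u1 - v1)^2 := by
    linear_combination (u1*v1 - u2*v2) * h1 - (u1 + u2 - v1 - v2) * h2
  exact ⟨key, by linear_combination key⟩
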